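/- For all L-structures M, K, tuples a from M, tuples s from K of the same length as a, tuples t from K of length < μ, and β < α: F^α_{M,a}(F^β_{K,st}, β) = H^α_{M,a}(K, st, β). Moreover, for any L-structure N and tuple b from N of the same length as a: F^α_{M,a} = F^α_{N,b} if and only if H^α_{M,a} = H^α_{N,b}. -/
import Mathlib


noncomputable section

open scoped Classical

/-- A (single-sorted, finitary) signature: function, relation and constant symbols. -/
structure Sig : Type 1 where
  Func : ℕ → Type
  Rel : ℕ → Type
  Const : Type

/-- A `σ`-structure on a carrier `M`: interpretations of all symbols. -/
structure Str (σ : Sig) (M : Type) : Type where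
  fn : ∀ {k : ℕ}, σ.Func k → (Fin k → M) → M
  rel : ∀ {k : ℕ}, σ.Rel k → (Fin k → M) → Prop
  cst : σ.Const → M

/-- The record of truth values of all unnested atomic formulas under all assignments
of their (finitely many) variables into an `n`-tuple: the components record the truth
values of the unnested atomic formulas `vᵢ = vⱼ`, `vᵢ = c`, `R(v̄)` and `f(v̄) = vᵢ`. -/
structure UAInv (σ : Sig) (n : ℕ) : Type where
  eqv : Fin n → Fin n → Prop
  cst : σ.Const → Fin n → Prop
  rel : ∀ k : ℕ, σ.Rel k → (Fin k → Fin n) → Prop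
  fnc : ∀ k : ℕ, σ.Func k → (Fin k → Fin n) → Fin n → Prop

/-- `I_{M,ā}`: the truth values in `M` of all unnested atomic formulas with variables
interpreted by entries of the tuple `ā`. -/
def uaInv {σ : Sig} {M : Type} (I : Str σ M) {n : ℕ} (a : Fin n → M) : UAInv σ n where
  eqv i j := a i = a j
  cst c i := a i = I.cst c
  rel _ R g := I.rel R (fun i => a (g i))
  fnc _ f g i := I.fn f (fun j => a (g j)) = a i

/-- A point of the domain of the invariant functions `H^α_{M,ā}` (besides the
`I_{M,ā}` part): a structure `K` together with a tuple `s̄t̄` of length `n + m`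
(`s̄` of the length `n` of `ā` and `t̄` of finite length `m`). -/
structure HKey (σ : Sig) (n : ℕ) : Type 1 where
  K : Type
  IK : Str σ K
  m : ℕ
  st : Fin (n + m) → K

/-- The invariant functions `H^α_{M,ā}`, represented as the pair consisting of
`I_{M,ā}` together with the map sending `((K, s̄t̄), β)` with `β < α` to the value
(`some true`/`some false` for `1`/`0`) of `H^α_{M,ā}(K, s̄t̄, β)`, and `none` outside
the domain.  `H^{β+1}_{M,ā}(K, s̄t̄, β) = 1` iff there is a tuple `c̄` in `M` of the
length of `t̄` with `H^β_{M,āc̄} = H^β_{K,s̄t̄}`; the restriction property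
`H^α_{M,ā} ↾ β = H^β_{M,ā}` holds by construction. -/
noncomputable def Hfun {σ : Sig} (α : Ordinal) {M : Type} (IM : Str σ M) {n : ℕ}
    (a : Fin n → M) : UAInv σ n × (HKey σ n × Ordinal → Option Bool) :=
  ⟨uaInv IM a,
    fun q =>
      if h : q.2 < α then
        some (if (∃ c : Fin q.1.m → M,
            Hfun q.2 IM (Fin.append a c) = Hfun q.2 q.1.IK q.1.st) then true else false)
      else none⟩
termination_by α
decreasing_by all_goals exact h

/-- The type of the invariant functions `F^α` for tuples of length `n`: such an
invariant consists of the `I`-part together with a map sending pairs `(w, β)` with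
`β < α` and `w` an element of the type of `F^β`-invariants for tuples of length
`n + m` (for some finite `m`) to `some true`/`some false` (the values `1`/`0`), or
`none` outside the domain. -/
noncomputable def FTm (σ : Sig) : Ordinal → ℕ → Type 1 :=
  Ordinal.lt_wf.fix fun α ih n =>
    UAInv σ n ×
      ((Σ β : {b : Ordinal // b < α}, Σ m : ℕ, ih β.1 β.2 (n + m)) → Option Bool)

theorem FTm_eq (σ : Sig) (α : Ordinal) (n : ℕ) :
    FTm σ α n =
      (UAInv σ n ×
        ((Σ β : {b : Ordinal // b < α}, Σ m : ℕ, FTm σ β.1 (n + m)) → Option Bool)) := by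
  rw [FTm, WellFounded.fix_eq]

/-- The recursively defined invariants `F^α_{M,ā}`: the base part is `I_{M,ā}`, and
for `β < α` the value at `(F^β_{K,s̄t̄}, β)` is `1` iff there is a tuple `c̄` in `M`
of the length of `t̄` with `F^β_{M,āc̄} = F^β_{K,s̄t̄}`; arguments that are not
`F^β`-invariants of a pair (structure, tuple) are outside the domain (`none`). -/
noncomputable def Ffun {σ : Sig} (α : Ordinal) {M : Type} (IM : Str σ M) {n : ℕ}
    (a : Fin n → M) : FTm σ α n :=
  cast (FTm_eq σ α n).symm
    (⟨uaInv IM a,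
      fun p =>
        if (∃ (K : Type) (IK : Str σ K) (st : Fin (n + p.2.1) → K),
            p.2.2 = Ffun p.1.1 IK st) then
          some (if (∃ c : Fin p.2.1 → M,
              Ffun p.1.1 IM (Fin.append a c) = p.2.2) then true else false)
        else none⟩ :
      UAInv σ n ×
        ((Σ β : {b : Ordinal // b < α}, Σ m : ℕ, FTm σ β.1 (n + m)) → Option Bool))
termination_by α
decreasing_by all_goals exact p.1.2

lemma Hfun_def {σ : Sig} (α : Ordinal) {M : Type} (IM : Str σ M) {n : ℕ} (a : Fin n → M) :
    Hfun α IM a = ⟨uaInv IM a,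
      fun q =>
        if _ : q.2 < α then
          some (if (∃ c : Fin q.1.m → M,
              Hfun q.2 IM (Fin.append a c) = Hfun q.2 q.1.IK q.1.st) then true else false)
        else none⟩ := by
  rw [Hfun]

lemma Ffun_def {σ : Sig} (α : Ordinal) {M : Type} (IM : Str σ M) {n : ℕ} (a : Fin n → M) :
    cast (FTm_eq σ α n) (Ffun α IM a) = ⟨uaInv IM a,
      fun p =>
        if (∃ (K : Type) (IK : Str σ K) (st : Fin (n + p.2.1) → K),
            p.2.2 = Ffun p.1.1 IK st) then
          some (if (∃ c : Fin p.2.1 → M,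
              Ffun p.1.1 IM (Fin.append a c) = p.2.2) then true else false)
        else none⟩ := by
  rw [Ffun, cast_cast, cast_eq]

lemma Hfun_fst {σ : Sig} (α : Ordinal) {M : Type} (IM : Str σ M) {n : ℕ} (a : Fin n → M) :
    (Hfun α IM a).1 = uaInv IM a := by rw [Hfun_def]

lemma Ffun_fst {σ : Sig} (α : Ordinal) {M : Type} (IM : Str σ M) {n : ℕ} (a : Fin n → M) :
    (cast (FTm_eq σ α n) (Ffun α IM a)).1 = uaInv IM a := by rw [Ffun_def]

lemma point_aux {σ : Sig} (α β : Ordinal) (hβ : β < α) {M K : Type}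
    (IM : Str σ M) (IK : Str σ K) (n m : ℕ) (a : Fin n → M) (st : Fin (n + m) → K)
    (hiff : ∀ {P Q : Type} (IP : Str σ P) (IQ : Str σ Q) (k : ℕ)
      (p : Fin k → P) (q : Fin k → Q),
      Ffun β IP p = Ffun β IQ q ↔ Hfun β IP p = Hfun β IQ q) :
    (cast (FTm_eq σ α n) (Ffun α IM a)).2 ⟨⟨β, hβ⟩, m, Ffun β IK st⟩ =
      (Hfun α IM a).2 (⟨K, IK, m, st⟩, β) := by
  rw [Ffun_def, Hfun_def]
  dsimp only
  rw [if_pos ⟨K, IK, st, rfl⟩, dif_pos hβ]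
  have e : (∃ c : Fin m → M, Ffun β IM (Fin.append a c) = Ffun β IK st) ↔
      (∃ c : Fin m → M, Hfun β IM (Fin.append a c) = Hfun β IK st) :=
    exists_congr fun c => hiff IM IK (n + m) (Fin.append a c) st
  rw [e]

lemma iff_aux {σ : Sig} (α : Ordinal) :
    ∀ {M N : Type} (IM : Str σ M) (IN : Str σ N) (n : ℕ)
      (a : Fin n → M) (b : Fin n → N),
      (Ffun α IM a = Ffun α IN b ↔ Hfun α IM a = Hfun α IN b) := by
  induction α using Ordinal.induction with
  | h α IH =>
  intro M N IM IN n a b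
  have point : ∀ (β : Ordinal) (hβ : β < α) {P K : Type} (IP : Str σ P) (IK : Str σ K)
      (k m : ℕ) (p : Fin k → P) (st : Fin (k + m) → K),
      (cast (FTm_eq σ α k) (Ffun α IP p)).2 ⟨⟨β, hβ⟩, m, Ffun β IK st⟩ =
        (Hfun α IP p).2 (⟨K, IK, m, st⟩, β) :=
    by intro β hβ P K IP IK k m p st
       exact point_aux α β hβ IP IK k m p st
         (fun IP' IQ' k' p' q' => IH β hβ IP' IQ' k' p' q')
  constructor
  · intro h
    have hc : cast (FTm_eq σ α n) (Ffun α IM a) = cast (FTm_eq σ α n) (Ffun α IN b) := by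
      rw [h]
    refine Prod.ext ?_ (funext fun q => ?_)
    · rw [Hfun_fst, Hfun_fst, ← Ffun_fst α IM a, ← Ffun_fst α IN b, hc]
    · obtain ⟨⟨K, IK, m, st⟩, β⟩ := q
      by_cases hβ : β < α
      · rw [← point β hβ IM IK n m a st, ← point β hβ IN IK n m b st, hc]
      · rw [Hfun_def α IM a, Hfun_def α IN b]
        dsimp only
        rw [dif_neg hβ, dif_neg hβ]
  · intro h
    have hS : cast (FTm_eq σ α n) (Ffun α IM a) = cast (FTm_eq σ α n) (Ffun α IN b) := by
      refine Prod.ext ?_ (funext fun p => ?_)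
      · rw [Ffun_fst, Ffun_fst, ← Hfun_fst α IM a, ← Hfun_fst α IN b, h]
      · obtain ⟨⟨β, hβ⟩, m, w⟩ := p
        by_cases hK : ∃ (K : Type) (IK : Str σ K) (st : Fin (n + m) → K), w = Ffun β IK st
        · obtain ⟨K, IK, st, rfl⟩ := hK
          rw [point β hβ IM IK n m a st, point β hβ IN IK n m b st, h]
        · rw [Ffun_def α IM a, Ffun_def α IN b]
          dsimp only
          rw [if_neg hK, if_neg hK]
    exact (cast_inj _).mp hS

/-- Relation between the `F`- and `H`-invariants: for `β < α`, any structure `K` and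
tuple `s̄t̄` from `K` (`s̄` of the length of `ā`, `t̄` of finite length `m`),
`F^α_{M,ā}(F^β_{K,s̄t̄}, β) = H^α_{M,ā}(K, s̄t̄, β)`; moreover, for any structure `N`
and tuple `b̄` from `N` of the length of `ā`, `F^α_{M,ā} = F^α_{N,b̄}` iff
`H^α_{M,ā} = H^α_{N,b̄}`. -/
theorem Ffun_Hfun {σ : Sig} (α β : Ordinal) (hβ : β < α) {M K N : Type}
    (IM : Str σ M) (IK : Str σ K) (IN : Str σ N) (n m : ℕ)
    (a : Fin n → M) (st : Fin (n + m) → K) (b : Fin n → N) :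
    ((cast (FTm_eq σ α n) (Ffun α IM a)).2 ⟨⟨β, hβ⟩, m, Ffun β IK st⟩ =
        (Hfun α IM a).2 (⟨K, IK, m, st⟩, β)) ∧
      (Ffun α IM a = Ffun α IN b ↔ Hfun α IM a = Hfun α IN b) :=
  ⟨point_aux α β hβ IM IK n m a st
      (fun IP IQ k p q => iff_aux β IP IQ k p q),
    iff_aux α IM IN n a b⟩

end
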